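/- For t > 0, the characteristic function φ(t) of the cube of a standard normal variable satisfies φ(t) = (√(2π)/3^{1/3})·t^{-1/3}·exp(t^{-2}/108)·Ai(t^{-4/3}/(4·3^{4/3})), where Ai is the Airy function. -/

import Mathlib

open MeasureTheory Real

/-- The Airy function, via `Ai(x) = (1/π) e^{-(2/3)x^{3/2}} ∫_0^∞ e^{-√x u²} cos(u³/3) du`
(valid for `x > 0`). -/
noncomputable def airyAi (x : ℝ) : ℝ :=
  (1 / π) * Real.exp (-(2 / 3) * x ^ ((3 : ℝ) / 2)) *
    ∫ u in Set.Ioi (0 : ℝ), Real.exp (-Real.sqrt x * u ^ 2) * Real.cos (u ^ 3 / 3)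

/-- The characteristic function of the cube of a standard normal variable,
`φ(t) = √(2/π) ∫_0^∞ e^{-x²/2} cos(t x³) dx`. -/
noncomputable def phiCubeR (t : ℝ) : ℝ :=
  Real.sqrt (2 / π) * ∫ x in Set.Ioi (0 : ℝ), Real.exp (-x ^ 2 / 2) * Real.cos (t * x ^ 3)

/-- For `t > 0`,
`φ(t) = (√(2π)/3^{1/3}) t^{-1/3} e^{t^{-2}/108} Ai(t^{-4/3}/(4·3^{4/3}))`. -/
theorem stmt_14 (t : ℝ) (ht : 0 < t) :
    phiCubeR t = (Real.sqrt (2 * π) / (3 : ℝ) ^ ((1 : ℝ) / 3)) * t ^ (-(1 : ℝ) / 3)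
      * Real.exp (t ^ (-(2 : ℝ)) / 108)
      * airyAi (t ^ (-(4 : ℝ) / 3) / (4 * (3 : ℝ) ^ ((4 : ℝ) / 3))) := by
  have h3 : (0:ℝ) < 3 := by norm_num
  set y : ℝ := t ^ (-(4 : ℝ) / 3) / (4 * (3 : ℝ) ^ ((4 : ℝ) / 3)) with hy
  set b : ℝ := (3*t) ^ ((1:ℝ)/3) with hbdef
  have hb : 0 < b := Real.rpow_pos_of_pos (by positivity) _
  -- key exponent facts
  have key1 : Real.sqrt y * b ^ 2 = 1/2 := by
    have harg : y = (t ^ (-(2:ℝ)/3) * (2⁻¹ * 3 ^ (-(2:ℝ)/3)))^2 := by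
      rw [hy, mul_pow, mul_pow, ← Real.rpow_natCast (t ^ _) 2, ← Real.rpow_natCast ((3:ℝ) ^ _) 2,
        ← Real.rpow_mul ht.le, ← Real.rpow_mul h3.le]
      norm_num
      rw [Real.rpow_neg h3.le]
      field_simp
    rw [harg, Real.sqrt_sq (by positivity), hbdef, ← Real.rpow_natCast ((3*t) ^ _) 2,
      ← Real.rpow_mul (by positivity), Real.mul_rpow h3.le ht.le]
    push_cast
    ring_nf
    have h1 : t ^ (-(2:ℝ)/3) * t ^ ((2:ℝ)/3) = 1 := by
      rw [← Real.rpow_add ht]; norm_num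
    have h2 : (3:ℝ) ^ (-(2:ℝ)/3) * (3:ℝ) ^ ((2:ℝ)/3) = 1 := by
      rw [← Real.rpow_add h3]; norm_num
    linear_combination ((3:ℝ)^(-(2:ℝ)/3) * (3:ℝ)^((2:ℝ)/3)/2) * h1 + (1/2) * h2
  have key2 : y ^ ((3:ℝ)/2) = t ^ (-(2:ℝ)) / 72 := by
    rw [hy, Real.div_rpow (by positivity) (by positivity),
      Real.mul_rpow (by norm_num) (by positivity),
      ← Real.rpow_mul ht.le, ← Real.rpow_mul h3.le,
      show (4:ℝ) = 2^(2:ℕ) by norm_num, ← Real.rpow_natCast 2 2, ← Real.rpow_mul (by norm_num)]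
    norm_num
  have key3 : b ^ 3 = 3 * t := by
    rw [hbdef, ← Real.rpow_natCast ((3*t) ^ _) 3, ← Real.rpow_mul (by positivity)]
    norm_num
  -- change of variables
  have hcv : (∫ x in Set.Ioi (0:ℝ), Real.exp (-x ^ 2 / 2) * Real.cos (t * x ^ 3))
      = b⁻¹ * ∫ u in Set.Ioi (0:ℝ), Real.exp (-Real.sqrt y * u ^ 2) * Real.cos (u ^ 3 / 3) := by
    have := integral_comp_mul_left_Ioi
      (fun u => Real.exp (-Real.sqrt y * u ^ 2) * Real.cos (u ^ 3 / 3)) 0 hb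
    rw [mul_zero] at this
    simp only [smul_eq_mul] at this
    rw [← this]
    apply setIntegral_congr_fun measurableSet_Ioi
    intro x hx
    simp only
    congr 1
    · congr 1
      have : -Real.sqrt y * (b * x) ^ 2 = -(Real.sqrt y * b ^ 2) * x ^ 2 := by ring
      rw [this, key1]; ring
    · congr 1
      have : (b * x) ^ 3 / 3 = (b ^ 3 / 3) * x ^ 3 := by ring
      rw [this, key3]
      field_simp
  -- constants
  have hsqrt : Real.sqrt (2 / π) = Real.sqrt (2 * π) / π := by
    rw [show (2/π : ℝ) = 2*π/π^2 by rw [sq]; field_simp,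
      Real.sqrt_div (by positivity), Real.sqrt_sq pi_pos.le]
    
  have hbinv : b⁻¹ = (3:ℝ) ^ (-(1:ℝ)/3) * t ^ (-(1:ℝ)/3) := by
    rw [hbdef, ← Real.rpow_neg_one ((3*t) ^ _), ← Real.rpow_mul (by positivity),
      Real.mul_rpow h3.le ht.le]
    norm_num
  have hexp : Real.exp (t ^ (-(2:ℝ)) / 108) * Real.exp (-(2 / 3) * y ^ ((3:ℝ)/2)) = 1 := by
    rw [key2, ← Real.exp_add]
    norm_num
    ring
  have h3inv : (3:ℝ) ^ (-(1:ℝ)/3) = ((3:ℝ) ^ ((1:ℝ)/3))⁻¹ := by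
    rw [← Real.rpow_neg_one ((3:ℝ) ^ _), ← Real.rpow_mul h3.le]
    norm_num
  rw [phiCubeR, airyAi, hcv, hsqrt, hbinv, h3inv]
  have hπ : π ≠ 0 := pi_ne_zero
  have h3p : ((3:ℝ) ^ ((1:ℝ)/3)) ≠ 0 := by positivity
  linear_combination (-(Real.sqrt (2*π)/π * (((3:ℝ)^((1:ℝ)/3))⁻¹) * t^(-(1:ℝ)/3) *
    (∫ u in Set.Ioi (0:ℝ), Real.exp (-Real.sqrt y * u ^ 2) * Real.cos (u ^ 3 / 3)))) * hexp
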